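/- arXiv:1908.06465 — 2 statements merged into one kernel-verified Lean document; each statement's English description precedes it below -/
import Mathlib

section
/- For every c ∈ ℂ and a ∈ ℂ \ {0}, the set J*(F_{c,a}), the closure of the set of saddle periodic points of F_{c,a}, is contained in the Julia set J(F_{c,a}) = J⁺(F_{c,a}) ∩ J⁻(F_{c,a}). -/
open Set Polynomial

/-- The complex quadratic Hénon map `F_{c,a}(x,y) = (x² + c − a·y, x)`. -/
noncomputable def henon (c a : ℂ) : ℂ × ℂ → ℂ × ℂ :=
  fun p => (p.1 ^ 2 + c - a * p.2, p.1)

/-- The inverse of the Hénon map: `(x,y) ↦ (y, (y² + c − x)/a)`. -/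
noncomputable def henonInv (c a : ℂ) : ℂ × ℂ → ℂ × ℂ :=
  fun p => (p.2, (p.2 ^ 2 + c - p.1) / a)

/-- `K⁺(F_{c,a})`: points with bounded forward orbit. -/
def Kplus (c a : ℂ) : Set (ℂ × ℂ) :=
  {p | Bornology.IsBounded (Set.range fun n => (henon c a)^[n] p)}

/-- `K⁻(F_{c,a})`: points with bounded backward orbit. -/
def Kminus (c a : ℂ) : Set (ℂ × ℂ) :=
  {p | Bornology.IsBounded (Set.range fun n => (henonInv c a)^[n] p)}

/-- The Julia set `J(F_{c,a}) = ∂K⁺ ∩ ∂K⁻`. -/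
def juliaSet (c a : ℂ) : Set (ℂ × ℂ) :=
  frontier (Kplus c a) ∩ frontier (Kminus c a)

/-- `p` is a saddle point of period `n` for `F`: `F^n(p) = p` and the complex derivative of
`F^n` at `p` has characteristic polynomial `(X − μ)(X − ν)` with `|μ| > 1 > |ν|`. -/
def IsSaddleOfPeriod (F : ℂ × ℂ → ℂ × ℂ) (n : ℕ) (p : ℂ × ℂ) : Prop :=
  F^[n] p = p ∧ ∃ μ ν : ℂ, 1 < ‖μ‖ ∧ ‖ν‖ < 1 ∧
    LinearMap.charpoly ((fderiv ℂ (F^[n]) p : (ℂ × ℂ) →L[ℂ] ℂ × ℂ) :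
      (ℂ × ℂ) →ₗ[ℂ] ℂ × ℂ) = (X - C μ) * (X - C ν)

/-- `p` is a saddle periodic point of `F`. -/
def IsSaddlePeriodicPt (F : ℂ × ℂ → ℂ × ℂ) (p : ℂ × ℂ) : Prop :=
  ∃ n : ℕ, 1 ≤ n ∧ IsSaddleOfPeriod F n p

/-- `J*(F)`: the closure of the set of saddle periodic points of `F`. -/
def Jstar (F : ℂ × ℂ → ℂ × ℂ) : Set (ℂ × ℂ) :=
  closure {p | IsSaddlePeriodicPt F p}

lemma henon_diff (c a : ℂ) : Differentiable ℂ (henon c a) :=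
  (((differentiable_fst.pow 2).add_const c).sub (differentiable_snd.const_mul a)).prodMk
    differentiable_fst

lemma henonInv_diff (c a : ℂ) : Differentiable ℂ (henonInv c a) := by
  unfold henonInv; fun_prop

lemma henon_leftInv {c a : ℂ} (ha : a ≠ 0) :
    Function.LeftInverse (henonInv c a) (henon c a) := by
  rintro ⟨x, y⟩
  simp only [henon, henonInv, Prod.mk.injEq, true_and]
  field_simp
  ring

lemma henon_grow (c a : ℂ) {q : ℂ × ℂ} (h1 : ‖a‖ + ‖c‖ + 2 ≤ ‖q.1‖) (h2 : ‖q.2‖ ≤ ‖q.1‖) :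
    2 * ‖q.1‖ ≤ ‖(henon c a q).1‖ := by
  have hA := norm_sub_norm_le (q.1 ^ 2 + c) (a * q.2)
  have hB : ‖q.1 ^ 2‖ ≤ ‖q.1 ^ 2 + c‖ + ‖c‖ := by
    have h := norm_add_le (q.1 ^ 2 + c) (-c)
    rwa [add_neg_cancel_right, norm_neg] at h
  have hp : ‖q.1 ^ 2‖ = ‖q.1‖ ^ 2 := norm_pow _ _
  have hm : ‖a * q.2‖ = ‖a‖ * ‖q.2‖ := norm_mul _ _
  have hx : (henon c a q).1 = q.1 ^ 2 + c - a * q.2 := rfl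
  have h0a : (0:ℝ) ≤ ‖a‖ := norm_nonneg _
  have h0c : (0:ℝ) ≤ ‖c‖ := norm_nonneg _
  have h02 : (0:ℝ) ≤ ‖q.2‖ := norm_nonneg _
  rw [hx]
  nlinarith [sq_nonneg (‖q.1‖ - 2), mul_le_mul_of_nonneg_left h2 h0a]

lemma henonInv_grow {c a : ℂ} (ha : a ≠ 0) {q : ℂ × ℂ}
    (h1 : 2 * ‖a‖ + ‖c‖ + 2 ≤ ‖q.2‖) (h2 : ‖q.1‖ ≤ ‖q.2‖) :
    2 * ‖q.2‖ ≤ ‖(henonInv c a q).2‖ := by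
  have hx : (henonInv c a q).2 = (q.2 ^ 2 + c - q.1) / a := rfl
  have ha0 : (0:ℝ) < ‖a‖ := norm_pos_iff.mpr ha
  have hA := norm_sub_norm_le (q.2 ^ 2 + c) q.1
  have hB : ‖q.2 ^ 2‖ ≤ ‖q.2 ^ 2 + c‖ + ‖c‖ := by
    have h := norm_add_le (q.2 ^ 2 + c) (-c)
    rwa [add_neg_cancel_right, norm_neg] at h
  have hp : ‖q.2 ^ 2‖ = ‖q.2‖ ^ 2 := norm_pow _ _
  have h0c : (0:ℝ) ≤ ‖c‖ := norm_nonneg _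
  have h01 : (0:ℝ) ≤ ‖q.1‖ := norm_nonneg _
  rw [hx, norm_div, le_div_iff₀ ha0]
  nlinarith [sq_nonneg (‖q.2‖ - 2)]

lemma orbit_tail_bounded (F : ℂ × ℂ → ℂ × ℂ) {q : ℂ × ℂ}
    (h : Bornology.IsBounded (Set.range fun k => F^[k] q)) (m : ℕ) :
    Bornology.IsBounded (Set.range fun k => F^[k] (F^[m] q)) := by
  refine h.subset ?_
  rintro _ ⟨k, rfl⟩
  exact ⟨k + m, by simpa using Function.iterate_add_apply F k m q⟩

lemma periodic_orbit_bounded (F : ℂ × ℂ → ℂ × ℂ) {p : ℂ × ℂ} {n : ℕ} (hn : 0 < n)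
    (hp : F^[n] p = p) : Bornology.IsBounded (Set.range fun k => F^[k] p) := by
  apply Set.Finite.isBounded
  apply Set.Finite.subset ((Set.finite_Iio n).image fun k => F^[k] p)
  rintro _ ⟨k, rfl⟩
  refine ⟨k % n, Nat.mod_lt _ hn, ?_⟩
  simp only
  conv_rhs => rw [← Nat.mod_add_div k n]
  rw [Function.iterate_add_apply, Function.iterate_mul, Function.iterate_fixed hp]

lemma henon_unbounded (c a : ℂ) {r : ℂ × ℂ} (h1 : ‖a‖ + ‖c‖ + 2 ≤ ‖r.1‖)
    (h2 : ‖r.2‖ ≤ ‖r.1‖) :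
    ¬ Bornology.IsBounded (Set.range fun k => (henon c a)^[k] r) := by
  have esc : ∀ k : ℕ, (‖a‖ + ‖c‖ + 2 ≤ ‖((henon c a)^[k] r).1‖ ∧
      ‖((henon c a)^[k] r).2‖ ≤ ‖((henon c a)^[k] r).1‖) ∧
      2 ^ k * ‖r.1‖ ≤ ‖((henon c a)^[k] r).1‖ := by
    intro k
    induction k with
    | zero =>
      simp only [Function.iterate_zero, id_eq, pow_zero, one_mul]
      exact ⟨⟨h1, h2⟩, le_rfl⟩
    | succ k ih =>
      have hstep := henon_grow c a ih.1.1 ih.1.2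
      have hit : (henon c a)^[k + 1] r = henon c a ((henon c a)^[k] r) :=
        Function.iterate_succ_apply' _ _ _
      have hy : (henon c a ((henon c a)^[k] r)).2 = ((henon c a)^[k] r).1 := rfl
      have h0 : (0:ℝ) ≤ ‖((henon c a)^[k] r).1‖ := norm_nonneg _
      have hr1 : (0:ℝ) ≤ ‖r.1‖ := norm_nonneg _
      have hpow : (0:ℝ) ≤ 2 ^ k := by positivity
      refine ⟨⟨?_, ?_⟩, ?_⟩
      · rw [hit]; linarith [ih.1.1]
      · rw [hit, hy]; linarith
      · rw [hit, pow_succ, mul_comm (2 ^ k : ℝ) 2, mul_assoc]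
        nlinarith [ih.2]
  intro hb
  obtain ⟨Cb, hCb⟩ := isBounded_iff_forall_norm_le.mp hb
  obtain ⟨k, hk⟩ := pow_unbounded_of_one_lt Cb (one_lt_two (α := ℝ))
  have h6 : ‖(henon c a)^[k] r‖ ≤ Cb := hCb _ ⟨k, rfl⟩
  have h7 := (norm_fst_le _).trans h6
  have h8 := (esc k).2
  have h9 : (1:ℝ) ≤ ‖r.1‖ := by
    have := norm_nonneg a; have := norm_nonneg c; linarith
  have h10 : (2:ℝ) ^ k ≤ 2 ^ k * ‖r.1‖ :=
    le_mul_of_one_le_right (by positivity) h9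
  linarith

lemma henon_Kbound (c a : ℂ) {q : ℂ × ℂ}
    (hq : Bornology.IsBounded (Set.range fun k => (henon c a)^[k] q)) (k : ℕ) :
    ‖(henon c a)^[k] q‖ ≤ max (‖a‖ + ‖c‖ + 2) ‖q‖ := by
  set R := ‖a‖ + ‖c‖ + 2 with hR
  set B := max R ‖q‖ with hB
  have dich : ∀ m : ℕ, ‖((henon c a)^[m] q).1‖ ≤ max R ‖((henon c a)^[m] q).2‖ := by
    intro m
    by_contra hlt
    push_neg at hlt
    rw [max_lt_iff] at hlt
    exact henon_unbounded c a hlt.1.le hlt.2.le (orbit_tail_bounded _ hq m)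
  have main : ∀ m : ℕ, ‖((henon c a)^[m] q).1‖ ≤ B ∧ ‖((henon c a)^[m] q).2‖ ≤ B := by
    intro m
    induction m with
    | zero =>
      simp only [Function.iterate_zero, id_eq]
      exact ⟨(norm_fst_le q).trans (le_max_right R ‖q‖),
        (norm_snd_le q).trans (le_max_right R ‖q‖)⟩
    | succ m ih =>
      have hit : (henon c a)^[m + 1] q = henon c a ((henon c a)^[m] q) :=
        Function.iterate_succ_apply' _ _ _
      have hy : ((henon c a)^[m + 1] q).2 = ((henon c a)^[m] q).1 := by rw [hit]; rfl
      constructor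
      · refine (dich (m + 1)).trans (max_le (le_max_left _ _) ?_)
        rw [hy]; exact ih.1.trans le_rfl
      · rw [hy]; exact ih.1
  rw [Prod.norm_def]
  exact max_le (main k).1 (main k).2

lemma henonInv_unbounded {c a : ℂ} (ha : a ≠ 0) {r : ℂ × ℂ}
    (h1 : 2 * ‖a‖ + ‖c‖ + 2 ≤ ‖r.2‖) (h2 : ‖r.1‖ ≤ ‖r.2‖) :
    ¬ Bornology.IsBounded (Set.range fun k => (henonInv c a)^[k] r) := by
  have esc : ∀ k : ℕ, (2 * ‖a‖ + ‖c‖ + 2 ≤ ‖((henonInv c a)^[k] r).2‖ ∧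
      ‖((henonInv c a)^[k] r).1‖ ≤ ‖((henonInv c a)^[k] r).2‖) ∧
      2 ^ k * ‖r.2‖ ≤ ‖((henonInv c a)^[k] r).2‖ := by
    intro k
    induction k with
    | zero =>
      simp only [Function.iterate_zero, id_eq, pow_zero, one_mul]
      exact ⟨⟨h1, h2⟩, le_rfl⟩
    | succ k ih =>
      have hstep := henonInv_grow ha ih.1.1 ih.1.2
      have hit : (henonInv c a)^[k + 1] r = henonInv c a ((henonInv c a)^[k] r) :=
        Function.iterate_succ_apply' _ _ _
      have hy : (henonInv c a ((henonInv c a)^[k] r)).1 = ((henonInv c a)^[k] r).2 := rfl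
      have h0 : (0:ℝ) ≤ ‖((henonInv c a)^[k] r).2‖ := norm_nonneg _
      have hr1 : (0:ℝ) ≤ ‖r.2‖ := norm_nonneg _
      refine ⟨⟨?_, ?_⟩, ?_⟩
      · rw [hit]; linarith [ih.1.1]
      · rw [hit, hy]; linarith
      · rw [hit, pow_succ, mul_comm (2 ^ k : ℝ) 2, mul_assoc]
        nlinarith [ih.2]
  intro hb
  obtain ⟨Cb, hCb⟩ := isBounded_iff_forall_norm_le.mp hb
  obtain ⟨k, hk⟩ := pow_unbounded_of_one_lt Cb (one_lt_two (α := ℝ))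
  have h6 : ‖(henonInv c a)^[k] r‖ ≤ Cb := hCb _ ⟨k, rfl⟩
  have h7 := (norm_snd_le _).trans h6
  have h8 := (esc k).2
  have h9 : (1:ℝ) ≤ ‖r.2‖ := by
    have := norm_nonneg a; have := norm_nonneg c; linarith
  have h10 : (2:ℝ) ^ k ≤ 2 ^ k * ‖r.2‖ :=
    le_mul_of_one_le_right (by positivity) h9
  linarith

lemma henonInv_Kbound {c a : ℂ} (ha : a ≠ 0) {q : ℂ × ℂ}
    (hq : Bornology.IsBounded (Set.range fun k => (henonInv c a)^[k] q)) (k : ℕ) :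
    ‖(henonInv c a)^[k] q‖ ≤ max (2 * ‖a‖ + ‖c‖ + 2) ‖q‖ := by
  set R := 2 * ‖a‖ + ‖c‖ + 2 with hR
  set B := max R ‖q‖ with hB
  have dich : ∀ m : ℕ, ‖((henonInv c a)^[m] q).2‖ ≤ max R ‖((henonInv c a)^[m] q).1‖ := by
    intro m
    by_contra hlt
    push_neg at hlt
    rw [max_lt_iff] at hlt
    exact henonInv_unbounded ha hlt.1.le hlt.2.le (orbit_tail_bounded _ hq m)
  have main : ∀ m : ℕ, ‖((henonInv c a)^[m] q).1‖ ≤ B ∧ ‖((henonInv c a)^[m] q).2‖ ≤ B := by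
    intro m
    induction m with
    | zero =>
      simp only [Function.iterate_zero, id_eq]
      exact ⟨(norm_fst_le q).trans (le_max_right R ‖q‖),
        (norm_snd_le q).trans (le_max_right R ‖q‖)⟩
    | succ m ih =>
      have hit : (henonInv c a)^[m + 1] q = henonInv c a ((henonInv c a)^[m] q) :=
        Function.iterate_succ_apply' _ _ _
      have hy : ((henonInv c a)^[m + 1] q).1 = ((henonInv c a)^[m] q).2 := by rw [hit]; rfl
      constructor
      · rw [hy]; exact ih.2
      · refine (dich (m + 1)).trans (max_le (le_max_left _ _) ?_)
        rw [hy]; exact ih.2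
  rw [Prod.norm_def]
  exact max_le (main k).1 (main k).2

lemma iterate_fderiv_eigen {G : ℂ × ℂ → ℂ × ℂ} (hG : Differentiable ℂ G) {p v : ℂ × ℂ}
    {μ : ℂ} (hp : G p = p) (hev : fderiv ℂ G p v = μ • v) (k : ℕ) :
    fderiv ℂ (G^[k]) p v = μ ^ k • v := by
  induction k with
  | zero => simp [Function.iterate_zero, fderiv_id']
  | succ k ih =>
    rw [Function.iterate_succ']
    rw [fderiv_comp p (hG _) ((hG.iterate k) p)]
    rw [ContinuousLinearMap.comp_apply, ih, map_smul, Function.iterate_fixed hp k, hev,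
      smul_smul, pow_succ]

lemma not_mem_interior_of_expanding {G : ℂ × ℂ → ℂ × ℂ} (hG : Differentiable ℂ G)
    {S : Set (ℂ × ℂ)} {R : ℝ}
    (hbound : ∀ q ∈ S, ∀ k : ℕ, ‖G^[k] q‖ ≤ max R ‖q‖)
    {p : ℂ × ℂ} (hp : G p = p) {μ : ℂ} (hμ : 1 < ‖μ‖)
    {v : ℂ × ℂ} (hv : v ≠ 0) (hev : fderiv ℂ G p v = μ • v) :
    p ∉ interior S := by
  intro hint
  obtain ⟨ε, hε, hball⟩ := Metric.mem_nhds_iff.mp (mem_interior_iff_mem_nhds.mp hint)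
  obtain ⟨ℓ, hℓ1, hℓv⟩ : ∃ ℓ : (ℂ × ℂ) →L[ℂ] ℂ, (∀ x, ‖ℓ x‖ ≤ ‖x‖) ∧ ℓ v ≠ 0 := by
    rcases eq_or_ne v.1 0 with h1 | h1
    · refine ⟨ContinuousLinearMap.snd ℂ ℂ ℂ, fun x => norm_snd_le x, ?_⟩
      simp only [ContinuousLinearMap.coe_snd']
      intro h2
      exact hv (Prod.ext h1 h2)
    · exact ⟨ContinuousLinearMap.fst ℂ ℂ ℂ, fun x => norm_fst_le x, h1⟩
  set M : ℝ := max R (‖p‖ + ε) with hM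
  have hM0 : 0 < M := lt_of_lt_of_le (by positivity) (le_max_right _ _)
  have hv' : 0 < ‖v‖ := norm_pos_iff.mpr hv
  set ρ : ℝ := ε / (2 * ‖v‖) with hρ
  have hρ0 : 0 < ρ := by positivity
  have key : ∀ k : ℕ, ‖μ‖ ^ k * ‖ℓ v‖ ≤ (2 * M + 1) / ρ := by
    intro k
    set g : ℂ → ℂ := fun z => ℓ (G^[k] (p + z • v)) with hg
    have hcurve : Differentiable ℂ fun z : ℂ => p + z • v :=
      (differentiable_id.smul_const v).const_add p
    have hgdiff : Differentiable ℂ g := ℓ.differentiable.comp ((hG.iterate k).comp hcurve)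
    have hmem : ∀ z ∈ Metric.ball (0 : ℂ) ρ, p + z • v ∈ S := by
      intro z hz
      apply hball
      rw [Metric.mem_ball, dist_eq_norm, add_sub_cancel_left, norm_smul]
      rw [Metric.mem_ball, dist_zero_right] at hz
      have : ‖z‖ * ‖v‖ < ρ * ‖v‖ := by
        exact mul_lt_mul_of_pos_right hz hv'
      have hρv : ρ * ‖v‖ = ε / 2 := by
        rw [hρ]; field_simp
      linarith
    have hval : ∀ z ∈ Metric.ball (0 : ℂ) ρ, ‖g z‖ ≤ M := by
      intro z hz
      have hb := hbound _ (hmem z hz) k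
      have hle : ‖p + z • v‖ ≤ ‖p‖ + ε := by
        have := norm_add_le p (z • v)
        rw [Metric.mem_ball, dist_zero_right] at hz
        have h2 : ‖z • v‖ ≤ ε / 2 := by
          rw [norm_smul]
          have : ‖z‖ * ‖v‖ ≤ ρ * ‖v‖ := mul_le_mul_of_nonneg_right hz.le hv'.le
          have hρv : ρ * ‖v‖ = ε / 2 := by rw [hρ]; field_simp
          linarith
        linarith
      calc ‖g z‖ ≤ ‖G^[k] (p + z • v)‖ := hℓ1 _
        _ ≤ max R ‖p + z • v‖ := hb
        _ ≤ M := max_le_max le_rfl hle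
    have hmaps : Set.MapsTo g (Metric.ball 0 ρ) (Metric.ball (g 0) (2 * M + 1)) := by
      intro z hz
      rw [Metric.mem_ball, dist_eq_norm]
      have b1 := hval z hz
      have b0 := hval 0 (Metric.mem_ball_self hρ0)
      calc ‖g z - g 0‖ ≤ ‖g z‖ + ‖g 0‖ := norm_sub_le _ _
        _ < 2 * M + 1 := by linarith
    have hd0 : HasDerivAt g (μ ^ k • ℓ v) 0 := by
      have h1 : HasDerivAt (fun z : ℂ => p + z • v) v 0 := by
        simpa using ((hasDerivAt_id (0 : ℂ)).smul_const v).const_add p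
      have h2 : HasFDerivAt (G^[k]) (fderiv ℂ (G^[k]) p) (p + (0 : ℂ) • v) := by
        simpa using ((hG.iterate k) p).hasFDerivAt
      have h3 := h2.comp_hasDerivAt 0 h1
      have h4 := (ℓ.hasFDerivAt).comp_hasDerivAt 0 h3
      have h5 : fderiv ℂ (G^[k]) p v = μ ^ k • v := iterate_fderiv_eigen hG hp hev k
      rw [hg]; simpa [h5, map_smul, Function.comp_def] using h4
    have hest := Complex.norm_deriv_le_div_of_mapsTo_ball hgdiff.differentiableOn
      (hmaps.mono_right Metric.ball_subset_closedBall) hρ0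
    rw [hd0.deriv] at hest
    calc ‖μ‖ ^ k * ‖ℓ v‖ = ‖μ ^ k • ℓ v‖ := by rw [norm_smul, norm_pow]
      _ ≤ (2 * M + 1) / ρ := hest
  have hℓv0 : 0 < ‖ℓ v‖ := norm_pos_iff.mpr hℓv
  obtain ⟨k, hk⟩ := pow_unbounded_of_one_lt ((2 * M + 1) / ρ / ‖ℓ v‖) hμ
  have h1 := key k
  rw [div_lt_iff₀ hℓv0] at hk
  linarith

lemma charpoly_coeff_one (μ ν : ℂ) : ((X - C μ) * (X - C ν)).coeff 1 = -(μ + ν) := by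
  have hexp : (X - C μ) * (X - C ν) = X ^ 2 - (C μ + C ν) * X + C μ * C ν := by ring
  rw [hexp]
  simp [coeff_add, coeff_sub, coeff_X_pow, coeff_C_mul, coeff_X_one, coeff_C, mul_comm]

lemma trace_of_charpoly (f : (ℂ × ℂ) →ₗ[ℂ] ℂ × ℂ) {μ ν : ℂ}
    (hcp : f.charpoly = (X - C μ) * (X - C ν)) :
    LinearMap.trace ℂ (ℂ × ℂ) f = μ + ν := by
  have hcard : Fintype.card (Module.Free.ChooseBasisIndex ℂ (ℂ × ℂ)) = 2 := by
    rw [← Module.finrank_eq_card_chooseBasisIndex]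
    simp [Module.finrank_prod]
  have hne : Nonempty (Module.Free.ChooseBasisIndex ℂ (ℂ × ℂ)) := by
    rw [← Fintype.card_pos_iff, hcard]; norm_num
  rw [LinearMap.trace_eq_matrix_trace ℂ (Module.Free.chooseBasis ℂ (ℂ × ℂ)),
    Matrix.trace_eq_neg_charpoly_coeff, ← LinearMap.charpoly_def, hcp, hcard,
    charpoly_coeff_one, neg_neg]

lemma exists_eigenvector (f : (ℂ × ℂ) →ₗ[ℂ] ℂ × ℂ) {μ ν : ℂ} (hne : μ ≠ ν)
    (hcp : f.charpoly = (X - C μ) * (X - C ν)) :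
    ∃ v : ℂ × ℂ, v ≠ 0 ∧ f v = μ • v := by
  by_contra h
  push_neg at h
  have hinj : ∀ w : ℂ × ℂ, f w - μ • w = 0 → w = 0 := by
    intro w hw
    by_contra hw0
    exact h w hw0 (by rwa [sub_eq_zero] at hw)
  have hCH := f.aeval_self_charpoly
  rw [hcp] at hCH
  have expand : (f - μ • (LinearMap.id : (ℂ × ℂ) →ₗ[ℂ] ℂ × ℂ)) * (f - ν • LinearMap.id) = 0 := by
    simpa [map_mul, map_sub, aeval_X, aeval_C, Module.algebraMap_end_eq_smul_id] using hCH
  have hfν : f = ν • LinearMap.id := by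
    apply LinearMap.ext
    intro w
    have h0 : (f - μ • (LinearMap.id : (ℂ × ℂ) →ₗ[ℂ] ℂ × ℂ))
        ((f - ν • (LinearMap.id : (ℂ × ℂ) →ₗ[ℂ] ℂ × ℂ)) w) = 0 := by
      have := DFunLike.congr_fun expand w
      simpa [Module.End.mul_apply] using this
    have h1 : (f - ν • (LinearMap.id : (ℂ × ℂ) →ₗ[ℂ] ℂ × ℂ)) w = 0 := by
      apply hinj
      simpa [LinearMap.sub_apply, LinearMap.smul_apply] using h0
    have h2 : f w - ν • w = 0 := by simpa [LinearMap.sub_apply] using h1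
    simpa [sub_eq_zero] using h2
  have htr1 : LinearMap.trace ℂ (ℂ × ℂ) f = μ + ν := trace_of_charpoly f hcp
  have htr2 : LinearMap.trace ℂ (ℂ × ℂ) f = ν * 2 := by
    rw [hfν, map_smul, LinearMap.trace_id]
    have : (Module.finrank ℂ (ℂ × ℂ) : ℂ) = 2 := by simp [Module.finrank_prod]
    rw [this]
    simp [smul_eq_mul]
  apply hne
  have := htr1.symm.trans htr2
  linear_combination this

/-- `J*(F_{c,a}) ⊆ J(F_{c,a})`. -/
theorem Jstar_subset_julia (c a : ℂ) (ha : a ≠ 0) :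
    Jstar (henon c a) ⊆ juliaSet c a := by
  apply closure_minimal ?_ (isClosed_frontier.inter isClosed_frontier)
  rintro p ⟨n, hn, hfix, μ, ν, hμ, hν, hcp⟩
  have hn0 : 0 < n := hn
  have hGdiff : Differentiable ℂ ((henon c a)^[n]) := (henon_diff c a).iterate n
  have hHdiff : Differentiable ℂ ((henonInv c a)^[n]) := (henonInv_diff c a).iterate n
  have hμ' : 1 < ‖μ‖ := by exact hμ
  have hν' : ‖ν‖ < 1 := by exact hν
  have hμν : μ ≠ ν := by
    intro h
    rw [h] at hμ'
    exact absurd (hμ'.trans hν') (lt_irrefl 1)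
  obtain ⟨v, hv0, hAv⟩ := exists_eigenvector
    ((fderiv ℂ ((henon c a)^[n]) p : (ℂ × ℂ) →L[ℂ] ℂ × ℂ) : (ℂ × ℂ) →ₗ[ℂ] ℂ × ℂ) hμν hcp
  obtain ⟨w, hw0, hAw⟩ := exists_eigenvector
    ((fderiv ℂ ((henon c a)^[n]) p : (ℂ × ℂ) →L[ℂ] ℂ × ℂ) : (ℂ × ℂ) →ₗ[ℂ] ℂ × ℂ) hμν.symm
    (hcp.trans (mul_comm _ _))
  have hAv' : fderiv ℂ ((henon c a)^[n]) p v = μ • v := hAv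
  have hAw' : fderiv ℂ ((henon c a)^[n]) p w = ν • w := hAw
  -- left inverse facts
  have hlinv := henon_leftInv (c := c) ha
  have hIfix : (henonInv c a)^[n] p = p := by
    have := (hlinv.iterate n) p
    rwa [hfix] at this
  -- membership
  have hpK : p ∈ Kplus c a := periodic_orbit_bounded (henon c a) hn0 hfix
  have hpK' : p ∈ Kminus c a := periodic_orbit_bounded (henonInv c a) hn0 hIfix
  -- derivative of inverse iterate
  have hcompid : ((henonInv c a)^[n]) ∘ ((henon c a)^[n]) = id :=
    funext fun x => (hlinv.iterate n) x
  have hBA : (fderiv ℂ ((henonInv c a)^[n]) p).comp (fderiv ℂ ((henon c a)^[n]) p)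
      = ContinuousLinearMap.id ℂ (ℂ × ℂ) := by
    have h1 := fderiv_comp p (hHdiff ((henon c a)^[n] p)) (hGdiff p)
    rw [hfix] at h1
    rw [← h1, hcompid, fderiv_id]
  have hBid : ∀ u : ℂ × ℂ,
      fderiv ℂ ((henonInv c a)^[n]) p (fderiv ℂ ((henon c a)^[n]) p u) = u := by
    intro u
    have := ContinuousLinearMap.ext_iff.mp hBA u
    simpa [ContinuousLinearMap.comp_apply] using this
  have hν0 : ν ≠ 0 := by
    intro h
    apply hw0
    have hz : fderiv ℂ ((henon c a)^[n]) p w = 0 := by rw [hAw', h, zero_smul]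
    calc w = fderiv ℂ ((henonInv c a)^[n]) p (fderiv ℂ ((henon c a)^[n]) p w) :=
          (hBid w).symm
      _ = 0 := by rw [hz, map_zero]
  have hBw : fderiv ℂ ((henonInv c a)^[n]) p w = ν⁻¹ • w := by
    have h1 := hBid w
    rw [hAw', map_smul] at h1
    calc fderiv ℂ ((henonInv c a)^[n]) p w
        = ν⁻¹ • (ν • fderiv ℂ ((henonInv c a)^[n]) p w) := by
          rw [smul_smul, inv_mul_cancel₀ hν0, one_smul]
      _ = ν⁻¹ • w := by rw [h1]
  have hνinv : 1 < ‖ν⁻¹‖ := by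
    rw [norm_inv]
    exact (one_lt_inv₀ (norm_pos_iff.mpr hν0)).2 hν'
  constructor
  · refine ⟨subset_closure hpK, ?_⟩
    refine not_mem_interior_of_expanding (R := ‖a‖ + ‖c‖ + 2) hGdiff ?_ hfix hμ' hv0 hAv'
    intro q hq k
    have hiter : ((henon c a)^[n])^[k] q = (henon c a)^[n * k] q := by
      rw [Function.iterate_mul]
    rw [hiter]
    exact henon_Kbound c a hq (n * k)
  · refine ⟨subset_closure hpK', ?_⟩
    refine not_mem_interior_of_expanding (R := 2 * ‖a‖ + ‖c‖ + 2) hHdiff ?_ hIfix hνinv hw0 hBw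
    intro q hq k
    have hiter : ((henonInv c a)^[n])^[k] q = (henonInv c a)^[n * k] q := by
      rw [Function.iterate_mul]
    rw [hiter]
    exact henonInv_Kbound ha hq (n * k)
end

section
/- Let Λ ⊆ ℂ be open and connected, λ₀ ∈ Λ, and let (F_λ)_{λ∈Λ} be a holomorphic family of dissipative Hénon maps, i.e. F_λ = F_{c_λ, a_λ} where λ ↦ c_λ and λ ↦ a_λ are holomorphic on Λ and 0 < |a_λ| < 1 for all λ. Suppose there is an equivariant branched holomorphic motion of J* over Λ based at λ₀, namely a map φ : Λ × J*(F_{λ₀}) → ℂ² with φ(λ₀, x) = x for all x, λ ↦ φ(λ, x) holomorphic for each fixed x, φ(λ, F_{λ₀}(x)) = F_λ(φ(λ, x)) for all λ and x, and φ(λ, J*(F_{λ₀})) = J*(F_λ) for each λ. Then the sets J*(F_λ) move continuously in the Hausdorff topology: the map λ ↦ J*(F_λ) is continuous with respect to the Hausdorff distance on nonempty compact subsets of ℂ². -/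
open Set Polynomial

/-- `J*(F)`: the closure of the set of saddle periodic points of `F`. -/
lemma henon_periodic_bound {c a : ℂ} {n : ℕ} (hn : 1 ≤ n) {p : ℂ × ℂ}
    (hp : (henon c a)^[n] p = p) : ‖p‖ ≤ 1 + ‖a‖ + ‖c‖ := by
  set F := henon c a with hF
  set x : ℕ → ℂ := fun j => (F^[j] p).1 with hxdef
  have hstep : ∀ j, F^[j+1] p = ((F^[j] p).1 ^ 2 + c - a * (F^[j] p).2, (F^[j] p).1) := by
    intro j; rw [Function.iterate_succ_apply']; rfl
  have hper : ∀ j, F^[j + n] p = F^[j] p := by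
    intro j; rw [Function.iterate_add_apply, hp]
  have nonempty : (Finset.range n).Nonempty := Finset.nonempty_range_iff.mpr (by omega)
  set M := (Finset.range n).sup' nonempty (fun j => ‖x j‖) with hMdef
  have hMle : ∀ j < n, ‖x j‖ ≤ M := fun j hj =>
    Finset.le_sup' (f := fun j => ‖x j‖) (Finset.mem_range.mpr hj)
  have hxper : ∀ j, x (j + n) = x j := fun j => congrArg Prod.fst (hper j)
  have hMall : ∀ j, ‖x j‖ ≤ M := by
    intro j
    induction j using Nat.strong_induction_on with
    | _ j ih =>
      by_cases h : j < n
      · exact hMle j h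
      · have h2 : j - n + n = j := by omega
        calc ‖x j‖ = ‖x (j - n + n)‖ := by rw [h2]
          _ = ‖x (j - n)‖ := by rw [hxper]
          _ ≤ M := ih _ (by omega)
  have hp2x : p.2 = x (n - 1) := by
    have h2 : n - 1 + 1 = n := by omega
    have h3 := congrArg Prod.snd (hstep (n - 1))
    rw [h2, hp] at h3
    exact h3
  obtain ⟨j₀, hj₀mem, hj₀⟩ := Finset.exists_mem_eq_sup' nonempty (fun j => ‖x j‖)
  have hy : ‖(F^[j₀] p).2‖ ≤ M := by
    cases j₀ with
    | zero =>
      show ‖(F^[0] p).2‖ ≤ M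
      rw [Function.iterate_zero_apply, hp2x]
      exact hMall _
    | succ k =>
      have h4 : (F^[k+1] p).2 = x k := congrArg Prod.snd (hstep k)
      rw [h4]; exact hMall k
  have hrel : x j₀ ^ 2 = x (j₀ + 1) - c + a * (F^[j₀] p).2 := by
    have h5 : x (j₀ + 1) = x j₀ ^ 2 + c - a * (F^[j₀] p).2 := congrArg Prod.fst (hstep j₀)
    rw [h5]; ring
  have hM0 : 0 ≤ M := le_trans (norm_nonneg _) (hMall 0)
  have hM2 : M ^ 2 ≤ M + ‖c‖ + ‖a‖ * M := by
    have : ‖x j₀ ^ 2‖ ≤ M + ‖c‖ + ‖a‖ * M := by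
      rw [hrel]
      calc ‖x (j₀ + 1) - c + a * (F^[j₀] p).2‖
          ≤ ‖x (j₀ + 1) - c‖ + ‖a * (F^[j₀] p).2‖ := norm_add_le _ _
        _ ≤ (‖x (j₀ + 1)‖ + ‖c‖) + ‖a‖ * ‖(F^[j₀] p).2‖ := by
            rw [norm_mul]; exact add_le_add (norm_sub_le _ _) le_rfl
        _ ≤ (M + ‖c‖) + ‖a‖ * M := by
            gcongr
            exact hMall _
    calc M ^ 2 = ‖x j₀‖ ^ 2 := by rw [hMdef, hj₀]
      _ = ‖x j₀ ^ 2‖ := (norm_pow _ _).symm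
      _ ≤ M + ‖c‖ + ‖a‖ * M := this
  have hMbound : M ≤ 1 + ‖a‖ + ‖c‖ := by
    nlinarith [norm_nonneg a, norm_nonneg c]
  have hp1 : ‖p.1‖ ≤ M := hMall 0
  have hp2 : ‖p.2‖ ≤ M := by rw [hp2x]; exact hMall _
  calc ‖p‖ = max ‖p.1‖ ‖p.2‖ := rfl
    _ ≤ M := max_le hp1 hp2
    _ ≤ 1 + ‖a‖ + ‖c‖ := hMbound

/-- if a holomorphic family of dissipative Hénon maps admits an equivariant
branched holomorphic motion of `J*`, then `λ ↦ J*(F_λ)` moves continuously in the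
Hausdorff topology. -/
theorem Jstar_moves_continuously_Hausdorff
    (Λ : Set ℂ) (hΛo : IsOpen Λ) (hΛc : IsConnected Λ) (l₀ : ℂ) (hl₀ : l₀ ∈ Λ)
    (cf af : ℂ → ℂ) (hcf : DifferentiableOn ℂ cf Λ) (haf : DifferentiableOn ℂ af Λ)
    (hdiss : ∀ lam ∈ Λ, 0 < ‖af lam‖ ∧ ‖af lam‖ < 1)
    (φ : ℂ → ℂ × ℂ → ℂ × ℂ)
    (hbase : ∀ x ∈ Jstar (henon (cf l₀) (af l₀)), φ l₀ x = x)
    (hholo : ∀ x ∈ Jstar (henon (cf l₀) (af l₀)), DifferentiableOn ℂ (fun lam => φ lam x) Λ)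
    (hequiv : ∀ lam ∈ Λ, ∀ x ∈ Jstar (henon (cf l₀) (af l₀)),
      φ lam (henon (cf l₀) (af l₀) x) = henon (cf lam) (af lam) (φ lam x))
    (himage : ∀ lam ∈ Λ, φ lam '' Jstar (henon (cf l₀) (af l₀)) = Jstar (henon (cf lam) (af lam))) :
    ∀ l₁ ∈ Λ, ∀ ε : ℝ, 0 < ε → ∃ δ : ℝ, 0 < δ ∧
      ∀ lam ∈ Λ, dist lam l₁ < δ →
        EMetric.hausdorffEdist (Jstar (henon (cf lam) (af lam)))
          (Jstar (henon (cf l₁) (af l₁))) < ENNReal.ofReal ε := by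
  intro l₁ hl₁ ε hε
  have hJ : ∀ c a : ℂ, Jstar (henon c a) ⊆ Metric.closedBall 0 (1 + ‖a‖ + ‖c‖) := by
    intro c a
    apply closure_minimal _ Metric.isClosed_closedBall
    rintro q ⟨n, hn, hfix, -⟩
    exact mem_closedBall_zero_iff.mpr (henon_periodic_bound hn hfix)
  set S := Jstar (henon (cf l₀) (af l₀)) with hS
  obtain ⟨r₀, hr₀pos, hball⟩ := Metric.isOpen_iff.mp hΛo l₁ hl₁
  set r := r₀ / 2 with hr
  have hrpos : 0 < r := by positivity
  have hcb : Metric.closedBall l₁ r ⊆ Λ :=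
    (Metric.closedBall_subset_ball (by rw [hr]; linarith)).trans hball
  have hcont : ContinuousOn (fun lam => 1 + ‖af lam‖ + ‖cf lam‖) (Metric.closedBall l₁ r) :=
    (continuousOn_const.add (haf.continuousOn.mono hcb).norm).add
      (hcf.continuousOn.mono hcb).norm
  obtain ⟨R, hR⟩ := (isCompact_closedBall l₁ r).exists_bound_of_continuousOn hcont
  have hRb : ∀ lam ∈ Metric.closedBall l₁ r, 1 + ‖af lam‖ + ‖cf lam‖ ≤ R := by
    intro lam hlam
    have h := hR lam hlam
    rw [Real.norm_eq_abs] at h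
    exact (le_abs_self _).trans h
  have hR1 : (1:ℝ) ≤ R := by
    have := hRb l₁ (Metric.mem_closedBall_self hrpos.le)
    nlinarith [norm_nonneg (af l₁), norm_nonneg (cf l₁)]
  have hRpos : 0 < R := lt_of_lt_of_le one_pos hR1
  have hφb : ∀ x ∈ S, ∀ lam ∈ Metric.closedBall l₁ r, ‖φ lam x‖ ≤ R := by
    intro x hx lam hlam
    have hlamΛ : lam ∈ Λ := hcb hlam
    have hmem : φ lam x ∈ Jstar (henon (cf lam) (af lam)) := by
      rw [← himage lam hlamΛ]; exact mem_image_of_mem _ hx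
    exact (mem_closedBall_zero_iff.mp (hJ _ _ hmem)).trans (hRb lam hlam)
  set L := R / (r / 2) with hL
  have hLpos : 0 < L := by positivity
  have hderiv : ∀ x ∈ S, ∀ lam ∈ Metric.ball l₁ (r/2),
      ‖deriv (fun t => φ t x) lam‖ ≤ L := by
    intro x hx lam hlam
    have hlam' := Metric.mem_ball.mp hlam
    have hsub2 : Metric.closedBall lam (r/2) ⊆ Metric.closedBall l₁ r := by
      intro z hz
      rw [Metric.mem_closedBall] at hz ⊢
      calc dist z l₁ ≤ dist z lam + dist lam l₁ := dist_triangle _ _ _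
        _ ≤ r := by linarith
    have hd : DiffContOnCl ℂ (fun t => φ t x) (Metric.ball lam (r/2)) := by
      apply DifferentiableOn.diffContOnCl
      apply (hholo x hx).mono
      rw [closure_ball lam (by positivity : r/2 ≠ 0)]
      exact hsub2.trans hcb
    have := Complex.norm_deriv_le_of_forall_mem_sphere_norm_le (by positivity : 0 < r/2) hd
      (fun z hz => hφb x hx z (hsub2 (Metric.sphere_subset_closedBall hz)))
    exact this
  have hδpos : 0 < min (r/2) (ε/(2*L)) := lt_min (by positivity) (by positivity)
  refine ⟨min (r/2) (ε/(2*L)), hδpos, ?_⟩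
  intro lam hlam hdist
  have hlamball : lam ∈ Metric.ball l₁ (r/2) :=
    Metric.mem_ball.mpr (hdist.trans_le (min_le_left _ _))
  have hl₁ball : l₁ ∈ Metric.ball l₁ (r/2) := Metric.mem_ball_self (by positivity)
  have key : ∀ x ∈ S, dist (φ lam x) (φ l₁ x) ≤ ε/2 := by
    intro x hx
    have hdiffAt : ∀ z ∈ Metric.ball l₁ (r/2), DifferentiableAt ℂ (fun t => φ t x) z := by
      intro z hz
      exact (hholo x hx).differentiableAt
        (hΛo.mem_nhds (hcb (Metric.ball_subset_closedBall
          ((Metric.ball_subset_ball (by linarith)) hz))))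
    have hlip := (convex_ball l₁ (r/2)).norm_image_sub_le_of_norm_deriv_le
      hdiffAt (fun z hz => hderiv x hx z hz) hl₁ball hlamball
    rw [dist_eq_norm]
    calc ‖φ lam x - φ l₁ x‖ ≤ L * ‖lam - l₁‖ := hlip
      _ ≤ L * (ε/(2*L)) := by
          gcongr
          rw [← dist_eq_norm]
          exact hdist.le.trans (min_le_right _ _)
      _ = ε/2 := by field_simp
  have hle : EMetric.hausdorffEdist (Jstar (henon (cf lam) (af lam)))
      (Jstar (henon (cf l₁) (af l₁))) ≤ ENNReal.ofReal (ε/2) := by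
    rw [← himage lam hlam, ← himage l₁ hl₁]
    apply EMetric.hausdorffEdist_le_of_mem_edist
    · rintro z ⟨x, hx, rfl⟩
      exact ⟨φ l₁ x, mem_image_of_mem _ hx,
        by rw [edist_dist]; exact ENNReal.ofReal_le_ofReal (key x hx)⟩
    · rintro z ⟨x, hx, rfl⟩
      exact ⟨φ lam x, mem_image_of_mem _ hx,
        by rw [edist_dist, dist_comm]; exact ENNReal.ofReal_le_ofReal (key x hx)⟩
  exact lt_of_le_of_lt hle ((ENNReal.ofReal_lt_ofReal_iff hε).mpr (by linarith))
end
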